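/- Let G be a real Hilbert space, let μ > 0, let γ ∈ (0, 1/μ), and set β = 1 − γμ. Let g : G → (−∞, +∞] be proper, lower semicontinuous, and μ-weakly convex, i.e., the function z ↦ g(z) + (μ/2)‖z‖² is convex. For every y ∈ G, the function z ↦ g(z) + ‖y − z‖²/(2γ) admits a unique minimizer, denoted Q y; then the operator Q : G → G is β-cocoercive, i.e., for all x, y ∈ G, ⟪x − y, Q x − Q y⟫ ≥ β‖Q x − Q y‖². -/

import Mathlib

open RealInnerProductSpace
open Filter


section helpers
variable {G : Type*} [NormedAddCommGroup G] [InnerProductSpace ℝ G]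

theorem norm_combo_sq (a b : ℝ) (hab : a + b = 1) (u v : G) :
    ‖a • u + b • v‖ ^ 2 = a * ‖u‖ ^ 2 + b * ‖v‖ ^ 2 - a * b * ‖u - v‖ ^ 2 := by
  have hb : b = 1 - a := by linarith
  subst hb
  have h1 : ∀ w : G, ‖w‖ ^ 2 = ⟪w, w⟫ := fun w => (real_inner_self_eq_norm_sq w).symm
  simp only [h1, inner_add_left, inner_add_right, inner_sub_left, inner_sub_right,
    real_inner_smul_left, real_inner_smul_right, real_inner_comm u v]
  ring

theorem ne_top_of_add_le (v : EReal) (x R : ℝ) (h : v + (x : EReal) ≤ (R : EReal)) :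
    v ≠ ⊤ := by
  intro htop
  rw [htop, EReal.top_add_coe] at h
  exact (EReal.coe_lt_top R).not_ge h

theorem inner_expand (x y p q : G) :
    ‖x - q‖ ^ 2 - ‖x - p‖ ^ 2 + ‖y - p‖ ^ 2 - ‖y - q‖ ^ 2 = 2 * ⟪x - y, p - q⟫ := by
  have h1 : ∀ w : G, ‖w‖ ^ 2 = ⟪w, w⟫ := fun w => (real_inner_self_eq_norm_sq w).symm
  simp only [h1, inner_sub_left, inner_sub_right]
  simp only [real_inner_comm x p, real_inner_comm x q, real_inner_comm y p,
    real_inner_comm y q, real_inner_comm p q]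
  ring

/-- Core strong convexity inequality (real form). -/
theorem keyA (μ γ : ℝ) (hγ0 : 0 < γ)
    (g : G → EReal) (hnotbot : ∀ z : G, g z ≠ ⊥)
    (hwc : ∀ z w : G, ∀ a b : ℝ, 0 ≤ a → 0 ≤ b → a + b = 1 →
      g (a • z + b • w) + ((μ / 2 * ‖a • z + b • w‖ ^ 2 : ℝ) : EReal)
        ≤ (a : EReal) * (g z + ((μ / 2 * ‖z‖ ^ 2 : ℝ) : EReal))
          + (b : EReal) * (g w + ((μ / 2 * ‖w‖ ^ 2 : ℝ) : EReal)))
    (y z w : G) (rz rw : ℝ) (hz : g z = (rz : EReal)) (hw : g w = (rw : EReal))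
    (t : ℝ) (ht0 : 0 ≤ t) (ht1 : t ≤ 1) :
    ∃ rc : ℝ, g ((1 - t) • z + t • w) = (rc : EReal) ∧
      rc + ‖y - ((1 - t) • z + t • w)‖ ^ 2 / (2 * γ)
        ≤ (1 - t) * (rz + ‖y - z‖ ^ 2 / (2 * γ)) + t * (rw + ‖y - w‖ ^ 2 / (2 * γ))
          - ((1 / γ - μ) / 2) * (t * (1 - t)) * ‖z - w‖ ^ 2 := by
  set a := 1 - t with ha
  set b := t with hb
  have hab : a + b = 1 := by simp [ha, hb]
  have ha0 : 0 ≤ a := by linarith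
  have hb0 : 0 ≤ b := ht0
  set c := a • z + b • w with hc
  have H := hwc z w a b ha0 hb0 hab
  rw [hz, hw] at H
  have hR : ((a : EReal) * (((rz : EReal)) + ((μ / 2 * ‖z‖ ^ 2 : ℝ) : EReal))
      + (b : EReal) * (((rw : EReal)) + ((μ / 2 * ‖w‖ ^ 2 : ℝ) : EReal)))
      = ((a * (rz + μ / 2 * ‖z‖ ^ 2) + b * (rw + μ / 2 * ‖w‖ ^ 2) : ℝ) : EReal) := by
    push_cast
    rfl
  rw [hR] at H
  have hgcne : g c ≠ ⊤ := ne_top_of_add_le _ _ _ H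
  have hgc : g c = ((g c).toReal : EReal) := (EReal.coe_toReal hgcne (hnotbot c)).symm
  refine ⟨(g c).toReal, hgc, ?_⟩
  rw [hgc, ← EReal.coe_add] at H
  have Hr : (g c).toReal + μ / 2 * ‖c‖ ^ 2
      ≤ a * (rz + μ / 2 * ‖z‖ ^ 2) + b * (rw + μ / 2 * ‖w‖ ^ 2) := by
    exact_mod_cast H
  have hNc : ‖c‖ ^ 2 = a * ‖z‖ ^ 2 + b * ‖w‖ ^ 2 - a * b * ‖z - w‖ ^ 2 :=
    norm_combo_sq a b hab z w
  have hyc : y - c = a • (y - z) + b • (y - w) := by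
    have h2 : a • (y - z) + b • (y - w) + c = (a + b) • y := by
      simp only [hc, smul_sub, add_smul]
      abel
    rw [hab, one_smul] at h2
    linear_combination (norm := abel) -h2
  have hYc : ‖y - c‖ ^ 2 = a * ‖y - z‖ ^ 2 + b * ‖y - w‖ ^ 2 - a * b * ‖z - w‖ ^ 2 := by
    rw [hyc, norm_combo_sq a b hab]
    have h3 : (y - z) - (y - w) = w - z := by abel
    rw [h3, norm_sub_rev w z]
  have key : (g c).toReal ≤ a * rz + b * rw + μ / 2 * (a * b * ‖z - w‖ ^ 2) := by
    rw [hNc] at Hr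
    nlinarith [Hr]
  have hid : ((1 - t) * (rz + ‖y - z‖ ^ 2 / (2 * γ)) + t * (rw + ‖y - w‖ ^ 2 / (2 * γ))
      - ((1 / γ - μ) / 2) * (t * (1 - t)) * ‖z - w‖ ^ 2)
      - ((g c).toReal + ‖y - c‖ ^ 2 / (2 * γ))
      = (a * rz + b * rw + μ / 2 * (a * b * ‖z - w‖ ^ 2) - (g c).toReal) := by
    rw [hYc]
    simp only [ha, hb]
    field_simp
    ring
  linarith [key, hid]

end helpers

set_option maxHeartbeats 1000000 in
theorem exists_min {G : Type*} [NormedAddCommGroup G] [InnerProductSpace ℝ G] [CompleteSpace G]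
    (μ γ : ℝ) (hμ : 0 < μ) (hγ : γ ∈ Set.Ioo 0 (1 / μ))
    (g : G → EReal)
    (hproper : ∃ z : G, g z ≠ ⊤) (hnotbot : ∀ z : G, g z ≠ ⊥)
    (hlsc : LowerSemicontinuous g)
    (hwc : ∀ z w : G, ∀ a b : ℝ, 0 ≤ a → 0 ≤ b → a + b = 1 →
      g (a • z + b • w) + ((μ / 2 * ‖a • z + b • w‖ ^ 2 : ℝ) : EReal)
        ≤ (a : EReal) * (g z + ((μ / 2 * ‖z‖ ^ 2 : ℝ) : EReal))
          + (b : EReal) * (g w + ((μ / 2 * ‖w‖ ^ 2 : ℝ) : EReal)))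
    (y : G) :
    ∃ q : G, ∀ z : G,
      g q + ((‖y - q‖ ^ 2 / (2 * γ) : ℝ) : EReal)
        ≤ g z + ((‖y - z‖ ^ 2 / (2 * γ) : ℝ) : EReal) := by
  obtain ⟨hγ0, hγ1⟩ := hγ
  have hα : 0 < 1 / γ - μ := by
    have h1 : γ * μ < 1 := by
      have := (lt_div_iff₀ hμ).mp hγ1
      linarith
    have h2 : μ < 1 / γ := by
      rw [lt_div_iff₀ hγ0]
      linarith
    linarith
  set α := 1 / γ - μ with hαdef
  clear_value α
  set f : G → EReal := fun z => g z + ((‖y - z‖ ^ 2 / (2 * γ) : ℝ) : EReal) with hf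
  have hquad : ∀ z : G, 0 ≤ ‖y - z‖ ^ 2 / (2 * γ) := fun z => by positivity
  obtain ⟨z₀, hz₀⟩ := hproper
  set r₀ := (g z₀).toReal with hr₀
  clear_value r₀
  have hgz₀ : g z₀ = (r₀ : EReal) := by
    rw [hr₀]; exact (EReal.coe_toReal hz₀ (hnotbot z₀)).symm
  set F₀ := r₀ + ‖y - z₀‖ ^ 2 / (2 * γ) with hF₀
  clear_value F₀
  have hfz₀ : f z₀ = (F₀ : EReal) := by
    rw [hF₀, hf]; simp only [hgz₀, ← EReal.coe_add]
  -- lower semicontinuity ball at z₀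
  obtain ⟨δ, hδ0, hball⟩ : ∃ δ > 0, ∀ w : G, dist w z₀ < δ → ((r₀ - 1 : ℝ) : EReal) < g w := by
    have hlt : ((r₀ - 1 : ℝ) : EReal) < g z₀ := by
      rw [hgz₀]; exact_mod_cast (by linarith : r₀ - 1 < r₀)
    have h := hlsc z₀ _ hlt
    rw [Metric.eventually_nhds_iff] at h
    obtain ⟨ε, hε, hh⟩ := h
    exact ⟨ε, hε, fun w hw => hh hw⟩
  set C := F₀ - (r₀ - 1) with hC
  clear_value C
  have hC0 : 0 < C := by
    have := hquad z₀
    simp only [hC, hF₀]; linarith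
  set K := 4 * C ^ 2 / (α * δ ^ 2) with hK
  clear_value K
  have hKeq : α * δ ^ 2 * K = 4 * C ^ 2 := by
    rw [hK]; field_simp
  set M := min (r₀ - 1) (F₀ - K) with hM
  clear_value M
  -- f is real-valued wherever g is (notation helper)
  have hfval : ∀ z : G, ∀ r : ℝ, g z = (r : EReal) →
      f z = ((r + ‖y - z‖ ^ 2 / (2 * γ) : ℝ) : EReal) := by
    intro z r hz
    rw [hf]; simp only [hz, ← EReal.coe_add]
  -- global lower bound
  have hlow : ∀ z : G, (M : EReal) ≤ f z := by
    intro z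
    by_cases hz : g z = ⊤
    · simp only [hf, hz, EReal.top_add_coe]; exact le_top
    · set rz := (g z).toReal with hrz
      clear_value rz
      have hgz : g z = (rz : EReal) := by
        rw [hrz]; exact (EReal.coe_toReal hz (hnotbot z)).symm
      rw [hfval z rz hgz]
      by_cases hd : dist z z₀ < δ
      · have h1 : ((r₀ - 1 : ℝ) : EReal) < g z := hball z hd
        rw [hgz] at h1
        have h2 : r₀ - 1 < rz := by exact_mod_cast h1
        have h3 : M ≤ r₀ - 1 := by rw [hM]; exact min_le_left _ _
        have := hquad z
        exact_mod_cast (by linarith : M ≤ rz + ‖y - z‖ ^ 2 / (2 * γ))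
      · push_neg at hd
        set r := ‖z - z₀‖ with hr
        clear_value r
        have hrd : dist z z₀ = r := by rw [hr]; exact dist_eq_norm z z₀
        have hrδ : δ ≤ r := by rw [← hrd]; exact hd
        have hr0 : 0 < r := lt_of_lt_of_le hδ0 hrδ
        set t := δ / (2 * r) with ht
        clear_value t
        have ht0 : 0 < t := by rw [ht]; positivity
        have ht1 : t ≤ 1 / 2 := by
          rw [ht, div_le_div_iff₀ (by positivity) (by norm_num)]
          linarith
        have htr : t * (2 * r) = δ := by
          rw [ht]; field_simp
        obtain ⟨rc, hrc, hineq⟩ := keyA μ γ hγ0 g hnotbot hwc y z₀ z r₀ rz hgz₀ hgz t ht0.le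
          (by linarith)
        set c := (1 - t) • z₀ + t • z with hc
        have hcz₀ : c - z₀ = t • (z - z₀) := by
          simp only [hc, sub_smul, one_smul, smul_sub]
          abel
        have hdistc : dist c z₀ < δ := by
          rw [dist_eq_norm, hcz₀, norm_smul, Real.norm_eq_abs, abs_of_pos ht0, ← hr]
          calc t * r = δ / 2 := by rw [ht]; field_simp
          _ < δ := by linarith
        have hrc1 : ((r₀ - 1 : ℝ) : EReal) < g c := hball c hdistc
        rw [hrc] at hrc1
        have hrc2 : r₀ - 1 < rc := by exact_mod_cast hrc1
        -- combine
        have hYc : 0 ≤ ‖y - c‖ ^ 2 / (2 * γ) := hquad c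
        have hzw : ‖z₀ - z‖ = r := by rw [norm_sub_rev, hr]
        rw [hzw, ← hαdef] at hineq
        have h1 : r₀ - 1 ≤ (1 - t) * F₀ + t * (rz + ‖y - z‖ ^ 2 / (2 * γ))
            - (α / 2) * (t * (1 - t)) * r ^ 2 := by
          rw [hF₀]
          linarith [hineq, hrc2, hYc]
        set Fz := rz + ‖y - z‖ ^ 2 / (2 * γ) with hFz
        clear_value Fz
        -- multiply h1 by 2r and use t * (2r) = δ
        have h5 := mul_le_mul_of_nonneg_left h1 (by positivity : (0:ℝ) ≤ 2 * r)
        have e1 : 2 * r * ((1 - t) * F₀ + t * Fz - (α / 2) * (t * (1 - t)) * r ^ 2)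
            = 2 * r * F₀ - δ * F₀ + δ * Fz - (α / 2) * δ * (1 - t) * r ^ 2 := by
          linear_combination (Fz - F₀ - (α / 2) * (1 - t) * r ^ 2) * htr
        rw [e1] at h5
        have h7 : (α / 4) * δ * r ^ 2 ≤ (α / 2) * δ * (1 - t) * r ^ 2 := by
          nlinarith [mul_nonneg (mul_nonneg hα.le hδ0.le) (sq_nonneg r), ht1]
        have e2 : 2 * r * (r₀ - 1) = 2 * r * F₀ - 2 * r * C := by rw [hC]; ring
        have h6 : δ * F₀ - 2 * r * C + (α / 4) * δ * r ^ 2 ≤ δ * Fz := by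
          linarith [h5, h7, e2]
        have h4 : 0 ≤ (α / 4) * δ * r ^ 2 + δ * K - 2 * r * C := by
          nlinarith [sq_nonneg (α * δ * r - 4 * C), hKeq, mul_pos hα hδ0,
            mul_pos (mul_pos hα hδ0) hδ0]
        have h8 : δ * (F₀ - K) ≤ δ * Fz := by
          have : δ * (F₀ - K) = δ * F₀ - δ * K := by ring
          linarith [h6, h4, this]
        have h9 : F₀ - K ≤ Fz := le_of_mul_le_mul_left (by linarith [h8]) hδ0
        have h10 : M ≤ F₀ - K := by rw [hM]; exact min_le_right _ _
        exact_mod_cast (by linarith : M ≤ Fz)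
  -- the infimum
  set T := {x : ℝ | ∃ z : G, f z ≤ (x : EReal)} with hT
  have hTne : F₀ ∈ T := ⟨z₀, le_of_eq hfz₀⟩
  have hTbdd : ∀ x ∈ T, M ≤ x := by
    rintro x ⟨z, hz⟩
    have := le_trans (hlow z) hz
    exact_mod_cast this
  set m := sInf T with hm
  clear_value m
  have hmM : M ≤ m := by rw [hm]; exact le_csInf ⟨F₀, hTne⟩ hTbdd
  have hmF₀ : m ≤ F₀ := by rw [hm]; exact csInf_le ⟨M, hTbdd⟩ hTne
  have hm_le : ∀ z : G, (m : EReal) ≤ f z := by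
    intro z
    by_cases hz : g z = ⊤
    · simp only [hf, hz, EReal.top_add_coe]; exact le_top
    · have hgz : g z = (((g z).toReal : ℝ) : EReal) := (EReal.coe_toReal hz (hnotbot z)).symm
      rw [hfval z _ hgz]
      have : ((g z).toReal + ‖y - z‖ ^ 2 / (2 * γ)) ∈ T :=
        ⟨z, le_of_eq (hfval z _ hgz)⟩
      rw [hm]
      exact_mod_cast csInf_le ⟨M, hTbdd⟩ this
  -- minimizing sequence
  have hseq : ∀ n : ℕ, ∃ z : G, f z ≤ ((m + 1 / (n + 1) : ℝ) : EReal) := by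
    intro n
    have h1 : sInf T < m + 1 / (n + 1) := by
      rw [← hm]; have : (0:ℝ) < 1 / (n + 1) := by positivity
      linarith
    obtain ⟨x, hxT, hx⟩ := exists_lt_of_csInf_lt ⟨F₀, hTne⟩ h1
    obtain ⟨z, hz⟩ := hxT
    exact ⟨z, le_trans hz (by exact_mod_cast hx.le)⟩
  choose u hu using hseq
  have hufin : ∀ n : ℕ, ∃ r : ℝ, g (u n) = (r : EReal) ∧
      m ≤ r + ‖y - u n‖ ^ 2 / (2 * γ) ∧
      r + ‖y - u n‖ ^ 2 / (2 * γ) ≤ m + 1 / (n + 1) := by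
    intro n
    have h1 := hu n
    have hne : g (u n) ≠ ⊤ := by
      apply ne_top_of_add_le (g (u n)) (‖y - u n‖ ^ 2 / (2 * γ)) (m + 1 / (n + 1))
      exact h1
    have hgu : g (u n) = (((g (u n)).toReal : ℝ) : EReal) :=
      (EReal.coe_toReal hne (hnotbot (u n))).symm
    refine ⟨(g (u n)).toReal, hgu, ?_, ?_⟩
    · have := hm_le (u n); rw [hfval (u n) _ hgu] at this; exact_mod_cast this
    · have := h1; rw [hfval (u n) _ hgu] at this; exact_mod_cast this
  choose v hv1 hv2 hv3 using hufin
  -- Cauchy estimate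
  have hcau : ∀ n k : ℕ, α * ‖u n - u k‖ ^ 2 ≤ 8 * (1 / (n + 1) + 1 / (k + 1)) := by
    intro n k
    obtain ⟨rc, hrc, hineq⟩ := keyA μ γ hγ0 g hnotbot hwc y (u n) (u k) (v n) (v k) (hv1 n) (hv1 k)
      (1/2) (by norm_num) (by norm_num)
    set c := (1 - 1/2 : ℝ) • u n + (1/2 : ℝ) • u k with hc
    have h1 : (m : EReal) ≤ f c := hm_le c
    rw [hfval c rc hrc] at h1
    have h2 : m ≤ rc + ‖y - c‖ ^ 2 / (2 * γ) := by exact_mod_cast h1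
    rw [← hαdef] at hineq
    nlinarith [hv2 n, hv3 n, hv2 k, hv3 k, hineq, h2]
  -- Cauchy sequence
  have hcauchy : CauchySeq u := by
    rw [Metric.cauchySeq_iff']
    intro ε hε
    obtain ⟨N, hN⟩ := exists_nat_gt (16 / (α * ε ^ 2))
    refine ⟨N, fun n hn => ?_⟩
    have h1 := hcau n N
    have h2 : 1 / ((n:ℝ) + 1) ≤ 1 / ((N:ℝ) + 1) := by
      apply one_div_le_one_div_of_le (by positivity)
      have : (N:ℝ) ≤ n := by exact_mod_cast hn
      linarith
    have h3 : α * ‖u n - u N‖ ^ 2 ≤ 16 / ((N:ℝ) + 1) := by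
      rw [div_eq_mul_inv]
      have : 1 / ((N:ℝ) + 1) = ((N:ℝ) + 1)⁻¹ := one_div _
      nlinarith [h1, h2]
    have hN1 : 0 < (N:ℝ) + 1 := by positivity
    have h4 : 16 / (α * ε ^ 2) < (N:ℝ) + 1 := by
      have : (N:ℝ) < (N:ℝ) + 1 := by linarith
      linarith [hN]
    have h5 : 16 / ((N:ℝ) + 1) < α * ε ^ 2 := by
      rw [div_lt_iff₀ hN1]
      rw [div_lt_iff₀ (by positivity : 0 < α * ε ^ 2)] at h4
      linarith
    have h6 : ‖u n - u N‖ ^ 2 < ε ^ 2 := by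
      have := lt_of_le_of_lt h3 h5
      nlinarith [this, hα]
    rw [dist_eq_norm]
    exact lt_of_pow_lt_pow_left₀ 2 hε.le h6
  obtain ⟨q, hq⟩ := cauchySeq_tendsto_of_complete hcauchy
  refine ⟨q, fun z => ?_⟩
  have hfq : f q ≤ (m : EReal) := by
    by_contra hcon
    push_neg at hcon
    obtain ⟨c', hc1, hc2⟩ := EReal.exists_between_coe_real hcon
    have hmc' : m < c' := by exact_mod_cast hc1
    set Qq := ‖y - q‖ ^ 2 / (2 * γ) with hQq
    have hgq : ((c' - Qq : ℝ) : EReal) < g q := by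
      by_cases hqt : g q = ⊤
      · rw [hqt]; exact EReal.coe_lt_top _
      · have hgqe : g q = (((g q).toReal : ℝ) : EReal) :=
          (EReal.coe_toReal hqt (hnotbot q)).symm
        rw [hfval q _ hgqe] at hc2
        rw [hgqe]
        have : c' < (g q).toReal + Qq := by exact_mod_cast hc2
        exact_mod_cast (by linarith : c' - Qq < (g q).toReal)
    have hev1 : ∀ᶠ n in atTop, ((c' - Qq : ℝ) : EReal) < g (u n) :=
      hq.eventually (hlsc q _ hgq)
    have hcont : Continuous fun w : G => ‖y - w‖ ^ 2 / (2 * γ) := by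
      apply Continuous.div_const
      exact ((continuous_const.sub continuous_id).norm.pow 2)
    set ε := (c' - m) / 2 with hε
    have hε0 : 0 < ε := by simp only [hε]; linarith
    have hev2 : ∀ᶠ n in atTop, Qq - ε < ‖y - u n‖ ^ 2 / (2 * γ) := by
      have := (hcont.tendsto q).comp hq
      exact this.eventually (eventually_gt_nhds (by linarith : Qq - ε < Qq))
    have hev3 : ∀ᶠ n : ℕ in atTop, 1 / ((n:ℝ) + 1) < ε := by
      have := tendsto_one_div_add_atTop_nhds_zero_nat (𝕜 := ℝ)
      exact this.eventually (eventually_lt_nhds hε0)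
    obtain ⟨n, h1, h2, h3⟩ := (hev1.and (hev2.and hev3)).exists
    rw [hv1 n] at h1
    have h1' : c' - Qq < v n := by exact_mod_cast h1
    have := hv3 n
    simp only [hε] at h2 h3
    linarith [h1', h2, h3, this]
  calc g q + ((‖y - q‖ ^ 2 / (2 * γ) : ℝ) : EReal) = f q := rfl
  _ ≤ (m : EReal) := hfq
  _ ≤ f z := hm_le z

theorem growth {G : Type*} [NormedAddCommGroup G] [InnerProductSpace ℝ G]
    (μ γ : ℝ) (hγ0 : 0 < γ) (hα : 0 < 1 / γ - μ)
    (g : G → EReal) (hnotbot : ∀ z : G, g z ≠ ⊥)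
    (hwc : ∀ z w : G, ∀ a b : ℝ, 0 ≤ a → 0 ≤ b → a + b = 1 →
      g (a • z + b • w) + ((μ / 2 * ‖a • z + b • w‖ ^ 2 : ℝ) : EReal)
        ≤ (a : EReal) * (g z + ((μ / 2 * ‖z‖ ^ 2 : ℝ) : EReal))
          + (b : EReal) * (g w + ((μ / 2 * ‖w‖ ^ 2 : ℝ) : EReal)))
    (x p q : G) (rp rq : ℝ) (hgp : g p = (rp : EReal)) (hgq : g q = (rq : EReal))
    (hmin : ∀ z : G, g p + ((‖x - p‖ ^ 2 / (2 * γ) : ℝ) : EReal)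
      ≤ g z + ((‖x - z‖ ^ 2 / (2 * γ) : ℝ) : EReal)) :
    ((1 / γ - μ) / 2) * ‖p - q‖ ^ 2
      ≤ (rq + ‖x - q‖ ^ 2 / (2 * γ)) - (rp + ‖x - p‖ ^ 2 / (2 * γ)) := by
  set d2 := ‖p - q‖ ^ 2 with hd2def
  have hd2nn : 0 ≤ d2 := by rw [hd2def]; positivity
  clear_value d2
  set D := (rq + ‖x - q‖ ^ 2 / (2 * γ)) - (rp + ‖x - p‖ ^ 2 / (2 * γ)) with hD
  clear_value D
  have hAll : ∀ t : ℝ, 0 < t → t ≤ 1 / 2 → ((1 / γ - μ) / 2) * (1 - t) * d2 ≤ D := by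
    intro t ht0 ht1
    obtain ⟨rc, hrc, hineq⟩ := keyA μ γ hγ0 g hnotbot hwc x p q rp rq hgp hgq t ht0.le
      (by linarith)
    set c := (1 - t) • p + t • q with hc
    have h1 := hmin c
    rw [hgp, hrc, ← EReal.coe_add, ← EReal.coe_add] at h1
    have h2 : rp + ‖x - p‖ ^ 2 / (2 * γ) ≤ rc + ‖x - c‖ ^ 2 / (2 * γ) := by
      exact_mod_cast h1
    rw [hd2def]
    have h3 : t * (((1 / γ - μ) / 2) * (1 - t) * ‖p - q‖ ^ 2)
        ≤ t * D := by
      rw [hD]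
      nlinarith [hineq, h2]
    exact le_of_mul_le_mul_left h3 ht0
  by_contra hcon
  push_neg at hcon
  have hD0 : 0 ≤ D := by
    have h := hAll (1/2) (by norm_num) (by norm_num)
    nlinarith [hα, hd2nn]
  have hd2pos : 0 < d2 := by nlinarith [hcon, hα, hd2nn]
  set A := (1 / γ - μ) / 2 with hA
  have hA0 : 0 < A := by rw [hA]; linarith
  clear_value A
  set t := (A * d2 - D) / (2 * A * d2) with ht
  have hnum : 0 < A * d2 - D := by
    rw [hA] at hcon ⊢; linarith [hcon]
  have hden : 0 < 2 * A * d2 := by positivity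
  have ht0 : 0 < t := by rw [ht]; positivity
  have ht1 : t ≤ 1 / 2 := by
    rw [ht, div_le_div_iff₀ hden (by norm_num)]
    nlinarith [hD0]
  have hteq : t * (2 * A * d2) = A * d2 - D := by
    rw [ht]; field_simp
  have h9 := hAll t ht0 ht1
  nlinarith [h9, hteq, hcon]

/-- For a proper lsc `μ`-weakly convex function `g`, `γ ∈ (0, 1/μ)` and `β = 1 - γμ`:
for every `y` the function `z ↦ g z + ‖y - z‖²/(2γ)` has a unique minimizer, and the
resulting operator `Q` is `β`-cocoercive. -/
theorem weakly_convex_prox_cocoercive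
    {G : Type*} [NormedAddCommGroup G] [InnerProductSpace ℝ G] [CompleteSpace G]
    (μ γ : ℝ) (hμ : 0 < μ) (hγ : γ ∈ Set.Ioo 0 (1 / μ))
    (β : ℝ) (hβ : β = 1 - γ * μ)
    (g : G → EReal)
    (hproper : ∃ z : G, g z ≠ ⊤) (hnotbot : ∀ z : G, g z ≠ ⊥)
    (hlsc : LowerSemicontinuous g)
    (hwc : ∀ z w : G, ∀ a b : ℝ, 0 ≤ a → 0 ≤ b → a + b = 1 →
      g (a • z + b • w) + ((μ / 2 * ‖a • z + b • w‖ ^ 2 : ℝ) : EReal)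
        ≤ (a : EReal) * (g z + ((μ / 2 * ‖z‖ ^ 2 : ℝ) : EReal))
          + (b : EReal) * (g w + ((μ / 2 * ‖w‖ ^ 2 : ℝ) : EReal))) :
    (∀ y : G, ∃! q : G, ∀ z : G,
      g q + ((‖y - q‖ ^ 2 / (2 * γ) : ℝ) : EReal)
        ≤ g z + ((‖y - z‖ ^ 2 / (2 * γ) : ℝ) : EReal)) ∧
    (∀ Q : G → G, (∀ y z : G,
        g (Q y) + ((‖y - Q y‖ ^ 2 / (2 * γ) : ℝ) : EReal)
          ≤ g z + ((‖y - z‖ ^ 2 / (2 * γ) : ℝ) : EReal)) →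
      ∀ x y : G, ⟪x - y, Q x - Q y⟫ ≥ β * ‖Q x - Q y‖ ^ 2) := by
  obtain ⟨hγ0, hγ1⟩ := hγ
  have hα : 0 < 1 / γ - μ := by
    have h1 : γ * μ < 1 := by
      have := (lt_div_iff₀ hμ).mp hγ1
      linarith
    have h2 : μ < 1 / γ := by
      rw [lt_div_iff₀ hγ0]
      linarith
    linarith
  obtain ⟨z₀, hz₀⟩ := hproper
  have hgz₀ : g z₀ = (((g z₀).toReal : ℝ) : EReal) := (EReal.coe_toReal hz₀ (hnotbot z₀)).symm
  have hfin : ∀ x p : G, (∀ z : G, g p + ((‖x - p‖ ^ 2 / (2 * γ) : ℝ) : EReal)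
      ≤ g z + ((‖x - z‖ ^ 2 / (2 * γ) : ℝ) : EReal)) → ∃ r : ℝ, g p = (r : EReal) := by
    intro x p hp
    have h := hp z₀
    rw [hgz₀, ← EReal.coe_add] at h
    exact ⟨(g p).toReal, (EReal.coe_toReal (ne_top_of_add_le _ _ _ h) (hnotbot p)).symm⟩
  constructor
  · intro y
    obtain ⟨q, hq⟩ := exists_min μ γ hμ ⟨hγ0, hγ1⟩ g ⟨z₀, hz₀⟩ hnotbot hlsc hwc y
    refine ⟨q, hq, ?_⟩
    intro p hp
    obtain ⟨rp, hgp⟩ := hfin y p hp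
    obtain ⟨rq, hgq⟩ := hfin y q hq
    have h1 := hp q
    rw [hgp, hgq, ← EReal.coe_add, ← EReal.coe_add] at h1
    have h1' : rp + ‖y - p‖ ^ 2 / (2 * γ) ≤ rq + ‖y - q‖ ^ 2 / (2 * γ) := by
      exact_mod_cast h1
    have h2 := growth μ γ hγ0 hα g hnotbot hwc y q p rq rp hgq hgp hq
    have h3 : ‖q - p‖ ^ 2 ≤ 0 := by nlinarith [h2, h1', hα, sq_nonneg ‖q - p‖]
    have h4 : ‖q - p‖ = 0 := by nlinarith [sq_nonneg ‖q - p‖, norm_nonneg (q - p), h3]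
    have h5 : q - p = 0 := norm_eq_zero.mp h4
    have h6 : q = p := by
      have := sub_eq_zero.mp h5
      exact this
    exact h6.symm
  · intro Q hQ x y
    obtain ⟨rp, hgp⟩ := hfin x (Q x) (hQ x)
    obtain ⟨rq, hgq⟩ := hfin y (Q y) (hQ y)
    set p := Q x with hpdef
    set q := Q y with hqdef
    have h1 := growth μ γ hγ0 hα g hnotbot hwc x p q rp rq hgp hgq (hQ x)
    have h2 := growth μ γ hγ0 hα g hnotbot hwc y q p rq rp hgq hgp (hQ y)
    rw [norm_sub_rev q p] at h2
    have hsum : 2 * ((1 / γ - μ) / 2) * ‖p - q‖ ^ 2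
        ≤ (‖x - q‖ ^ 2 - ‖x - p‖ ^ 2 + ‖y - p‖ ^ 2 - ‖y - q‖ ^ 2) / (2 * γ) := by
      have e : (‖x - q‖ ^ 2 - ‖x - p‖ ^ 2 + ‖y - p‖ ^ 2 - ‖y - q‖ ^ 2) / (2 * γ)
          = ((rq + ‖x - q‖ ^ 2 / (2 * γ)) - (rp + ‖x - p‖ ^ 2 / (2 * γ)))
            + ((rp + ‖y - p‖ ^ 2 / (2 * γ)) - (rq + ‖y - q‖ ^ 2 / (2 * γ))) := by
        ring
      rw [e]
      linarith [h1, h2]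
    rw [inner_expand x y p q] at hsum
    rw [ge_iff_le, hβ]
    have h3 : 2 * ((1 / γ - μ) / 2) * ‖p - q‖ ^ 2 * (2 * γ) ≤ 2 * ⟪x - y, p - q⟫ := by
      rw [le_div_iff₀ (by positivity : (0:ℝ) < 2 * γ)] at hsum
      exact hsum
    have e2 : 2 * ((1 / γ - μ) / 2) * ‖p - q‖ ^ 2 * (2 * γ)
        = 2 * ((1 - γ * μ) * ‖p - q‖ ^ 2) := by
      field_simp
    linarith [h3, e2]
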